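/- Let H be a real Hilbert space, δ > 0, K₀ ≥ 0, p > 0, q > 0, and let A be a self-adjoint nonnegative bounded operator. Let u ∈ C²([0,∞), H) satisfy u''(t) + 2δu'(t) + Au(t) = g(t) where g is continuous with |g(t)| ≤ K₀(|u(t)|^{1+p} + |A^{1/2}u(t)|^{1+q}) for all t ≥ 0. If there exists T ≥ 0 with u(T) = 0 and u'(T) = 0, then u(t) = 0 and u'(t) = 0 for all t ≥ 0. -/

import Mathlib

open Set Real

set_option maxHeartbeats 1000000

private lemma gron_zero {E : Type*} [NormedAddCommGroup E] [NormedSpace ℝ E]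
    {f f' : ℝ → E} {K a b : ℝ} (hf : ContinuousOn f (Icc a b))
    (hf' : ∀ x ∈ Ico a b, HasDerivWithinAt f (f' x) (Ici x) x)
    (ha : f a = 0) (bound : ∀ x ∈ Ico a b, ‖f' x‖ ≤ K * ‖f x‖) :
    ∀ x ∈ Icc a b, f x = 0 := by
  intro x hx
  have h := norm_le_gronwallBound_of_norm_deriv_right_le (δ := 0) (ε := 0) hf hf'
    (by simp [ha]) (fun t ht => by simpa using bound t ht) x hx
  rw [gronwallBound_ε0_δ0] at h
  simpa using le_antisymm h (norm_nonneg _)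

private lemma rpow_le_self_aux {x r : ℝ} (hx0 : 0 ≤ x) (hx1 : x ≤ 1) (hr : 0 < r) :
    x ^ ((1:ℝ)+r) ≤ x := by
  rcases eq_or_lt_of_le hx0 with h | h
  · rw [← h, Real.zero_rpow (by positivity)]
  · calc x ^ ((1:ℝ)+r) ≤ x ^ (1:ℝ) :=
        Real.rpow_le_rpow_of_exponent_ge h hx1 (by linarith)
    _ = x := Real.rpow_one x

/-- Forward and backward uniqueness of the null solution for the damped equation with
a superlinear right-hand side. -/
theorem stmt11 {H : Type*} [NormedAddCommGroup H] [InnerProductSpace ℝ H] [CompleteSpace H]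
    (A S : H →L[ℝ] H)
    (hA : IsSelfAdjoint A) (hApos : ∀ u : H, 0 ≤ (@inner ℝ H _ (A u) (u)))
    (hS : IsSelfAdjoint S) (hSpos : ∀ u : H, 0 ≤ (@inner ℝ H _ (S u) (u))) (hSA : S.comp S = A)
    (δ K₀ p q : ℝ) (hδ : 0 < δ) (hK₀ : 0 ≤ K₀) (hp : 0 < p) (hq : 0 < q)
    (u : ℝ → H) (hu : ContDiff ℝ 2 u)
    (g : ℝ → H) (hg : Continuous g)
    (hODE : ∀ t ≥ (0:ℝ), deriv (deriv u) t + (2*δ) • deriv u t + A (u t) = g t)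
    (hgb : ∀ t ≥ (0:ℝ), ‖g t‖ ≤ K₀ * (‖u t‖ ^ ((1:ℝ)+p) + ‖S (u t)‖ ^ ((1:ℝ)+q)))
    (T : ℝ) (hT : 0 ≤ T) (huT : u T = 0) (huT' : deriv u T = 0) :
    ∀ t ≥ (0:ℝ), u t = 0 ∧ deriv u t = 0 := by
  have hu1 : Differentiable ℝ u := hu.differentiable (by norm_num)
  have hu2 : Differentiable ℝ (deriv u) := by
    have h2 : ContDiff ℝ ((1:ℕ) + 1) u := by exact_mod_cast hu
    have h := (contDiff_succ_iff_deriv).1 h2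
    exact h.2.2.differentiable (by norm_num)
  set v : ℝ → H × H × H := fun t => (deriv u t, S (u t), u t) with hv
  set v' : ℝ → H × H × H := fun t => (deriv (deriv u) t, S (deriv u t), deriv u t) with hv'
  set K : ℝ := 2*K₀ + 2*δ + ‖S‖ + 1 with hK
  have hderiv : ∀ t, HasDerivAt v (v' t) t := by
    intro t
    exact ((hu2 t).hasDerivAt.prodMk
      (((S.hasFDerivAt).comp_hasDerivAt t (hu1 t).hasDerivAt).prodMk (hu1 t).hasDerivAt))
  have hvcont : Continuous v := by
    rw [continuous_iff_continuousAt]; exact fun t => (hderiv t).continuousAt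
  -- component norm bounds
  have hcomp1 : ∀ t, ‖deriv u t‖ ≤ ‖v t‖ := fun t => norm_fst_le (v t)
  have hcomp2 : ∀ t, ‖S (u t)‖ ≤ ‖v t‖ := fun t => (norm_fst_le ((v t).2)).trans (norm_snd_le (v t))
  have hcomp3 : ∀ t, ‖u t‖ ≤ ‖v t‖ := fun t => (norm_snd_le ((v t).2)).trans (norm_snd_le (v t))
  have hSnn : (0:ℝ) ≤ ‖S‖ := norm_nonneg _
  -- key differential inequality on the region ‖v‖ ≤ 1
  have key : ∀ t, 0 ≤ t → ‖v t‖ ≤ 1 → ‖v' t‖ ≤ K * ‖v t‖ := by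
    intro t ht hle
    have hvnn : (0:ℝ) ≤ ‖v t‖ := norm_nonneg _
    have hg1 : ‖g t‖ ≤ 2 * K₀ * ‖v t‖ := by
      refine (hgb t ht).trans ?_
      have e1 : ‖u t‖ ^ ((1:ℝ)+p) ≤ ‖v t‖ :=
        (rpow_le_self_aux (norm_nonneg _) ((hcomp3 t).trans hle) hp).trans (hcomp3 t)
      have e2 : ‖S (u t)‖ ^ ((1:ℝ)+q) ≤ ‖v t‖ :=
        (rpow_le_self_aux (norm_nonneg _) ((hcomp2 t).trans hle) hq).trans (hcomp2 t)
      nlinarith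
    have hu'' : deriv (deriv u) t = g t - (2*δ) • deriv u t - A (u t) := by
      have := hODE t ht; rw [← this]; abel
    have hAu : ‖A (u t)‖ ≤ ‖S‖ * ‖v t‖ := by
      have h1 : A (u t) = S (S (u t)) := by rw [← hSA]; rfl
      rw [h1]
      exact (S.le_opNorm _).trans (by nlinarith [hcomp2 t])
    have h2 : ‖deriv (deriv u) t‖ ≤ K * ‖v t‖ := by
      rw [hu'']
      have step : ‖g t - (2*δ) • deriv u t - A (u t)‖
          ≤ ‖g t‖ + ‖(2*δ) • deriv u t‖ + ‖A (u t)‖ :=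
        (norm_sub_le _ _).trans (add_le_add_left (norm_sub_le _ _) _)
      have hsm : ‖(2*δ) • deriv u t‖ ≤ 2*δ*‖v t‖ := by
        rw [norm_smul, Real.norm_eq_abs, abs_of_pos (by linarith)]
        nlinarith [hcomp1 t]
      refine step.trans ?_
      rw [hK]; nlinarith
    have h3 : ‖S (deriv u t)‖ ≤ K * ‖v t‖ := by
      refine (S.le_opNorm _).trans ?_
      rw [hK]; nlinarith [hcomp1 t]
    have h4 : ‖deriv u t‖ ≤ K * ‖v t‖ := by
      refine (hcomp1 t).trans ?_
      rw [hK]; nlinarith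
    simp only [hv', Prod.norm_def]
    exact max_le h2 (max_le h3 h4)
  -- forward Gronwall
  have fwd : ∀ a b : ℝ, 0 ≤ a → v a = 0 → (∀ t ∈ Icc a b, ‖v t‖ ≤ 1) →
      ∀ t ∈ Icc a b, v t = 0 := by
    intro a b ha h0 hsmall
    refine gron_zero (K := K) hvcont.continuousOn
      (fun t ht => (hderiv t).hasDerivWithinAt) h0 ?_
    intro t ht
    exact key t (le_trans ha ht.1) (hsmall t (Ico_subset_Icc_self ht))
  -- backward Gronwall
  have bwd : ∀ a b : ℝ, 0 ≤ a → a ≤ b → v b = 0 → (∀ t ∈ Icc a b, ‖v t‖ ≤ 1) →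
      ∀ t ∈ Icc a b, v t = 0 := by
    intro a b ha hab h0 hsmall
    have hmem : ∀ s ∈ Icc a b, a + b - s ∈ Icc a b :=
      fun s hs => ⟨by linarith [hs.2], by linarith [hs.1]⟩
    have hwd : ∀ s : ℝ, HasDerivAt (fun s => v (a + b - s)) (-(v' (a+b-s))) s := by
      intro s
      have h1 : HasDerivAt (fun s : ℝ => a + b - s) (-1) s := by
        simpa using (hasDerivAt_id s).const_sub (a+b)
      have := (hderiv (a+b-s)).scomp s h1
      simpa [Function.comp_def] using this
    have hzero : ∀ s ∈ Icc a b, v (a + b - s) = 0 := by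
      refine gron_zero (K := K) (f' := fun s => -(v' (a+b-s)))
        (hvcont.comp (by continuity)).continuousOn
        (fun s _ => (hwd s).hasDerivWithinAt) (by simpa using h0) ?_
      intro s hs
      rw [norm_neg]
      exact key (a+b-s) (le_trans ha (hmem s (Ico_subset_Icc_self hs)).1)
        (hsmall _ (hmem s (Ico_subset_Icc_self hs)))
    intro t ht
    have h := hzero (a + b - t) (hmem t ht)
    rwa [show a + b - (a + b - t) = t by ring] at h
  have vT : v T = 0 := by
    rw [hv]; simp [huT, huT', Prod.ext_iff]
  -- connectedness argument
  have main : ∀ t ≥ (0:ℝ), v t = 0 := by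
    haveI : PreconnectedSpace (Ici (0:ℝ)) := Subtype.preconnectedSpace isPreconnected_Ici
    set Z : Set (Ici (0:ℝ)) := {x | v x = 0} with hZ
    have hVc : Continuous fun x : Ici (0:ℝ) => v x := hvcont.comp continuous_subtype_val
    have hZclosed : IsClosed Z := isClosed_eq hVc continuous_const
    have hZopen : IsOpen Z := by
      rw [Metric.isOpen_iff]
      rintro ⟨t₀, ht₀⟩ hx
      simp only [hZ, mem_setOf_eq] at hx
      obtain ⟨η, hη, hball⟩ := Metric.continuousAt_iff.mp hvcont.continuousAt 1 one_pos
      refine ⟨η, hη, ?_⟩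
      rintro ⟨s, hs⟩ hdist
      rw [Metric.mem_ball, Subtype.dist_eq, Real.dist_eq] at hdist
      simp only [hZ, mem_setOf_eq]
      have hnear : ∀ x : ℝ, |x - t₀| < η → ‖v x‖ ≤ 1 := by
        intro x hxd
        have := hball (by rwa [Real.dist_eq])
        rw [hx, dist_zero_right] at this
        exact this.le
      rcases le_total t₀ s with hc | hc
      · refine fwd t₀ s ht₀ hx ?_ s ⟨hc, le_refl s⟩
        intro x hxm
        refine hnear x ?_
        rw [abs_sub_lt_iff]
        constructor
        · calc x - t₀ ≤ s - t₀ := by linarith [hxm.2]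
          _ ≤ |s - t₀| := le_abs_self _
          _ < η := hdist
        · linarith [hxm.1]
      · refine bwd s t₀ hs hc hx ?_ s ⟨le_refl s, hc⟩
        intro x hxm
        refine hnear x ?_
        rw [abs_sub_lt_iff]
        constructor
        · linarith [hxm.2]
        · calc t₀ - x ≤ t₀ - s := by linarith [hxm.1]
          _ ≤ |s - t₀| := by rw [abs_sub_comm]; exact le_abs_self _
          _ < η := hdist
    rcases isClopen_iff.mp ⟨hZclosed, hZopen⟩ with h | h
    · exfalso
      have : (⟨T, hT⟩ : Ici (0:ℝ)) ∈ Z := vT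
      rw [h] at this
      exact this
    · intro t ht
      have : (⟨t, ht⟩ : Ici (0:ℝ)) ∈ Z := by rw [h]; trivial
      exact this
  intro t ht
  have h := main t ht
  rw [hv] at h
  simp only [Prod.ext_iff, Prod.fst_zero, Prod.snd_zero] at h
  exact ⟨h.2.2, h.1⟩
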